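/- In ℚ[g₂,g₃][[p,p′]], set W(p) := 1 + Σ_{n≥0} a_n p^{n+2} (so that ℘(p) = W(p)/p²) and V(p) := −2 + Σ_{n≥1} n·a_n p^{n+2} (so that d℘/dp = V(p)/p³), and define D := p′²·W(p) − p²·W(p′) and N := p′³·V(p) − p³·V(p′). Then there exists h ∈ ℚ[g₂,g₃][[p,p′]] such that (p+p′)·N = h·D; equivalently, the expansion of (℘′(p)−℘′(p′))/(℘(p)−℘(p′)) has the form (1/(p·p′·(p+p′)))·(an element of ℚ[g₂,g₃][[p,p′]]). -/

import Mathlib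

/-!
STATEMENT 0: There exists a unique family `(aₙ)` of elements of `ℚ[g₂,g₃]` such that
`℘ := p⁻² + Σ_{n≥0} aₙ pⁿ ∈ ℚ[g₂,g₃]((p))` satisfies `(℘′)² = 4℘³ − g₂℘ − g₃`.
-/

noncomputable section

/-- The polynomial ring `ℚ[g₂, g₃]`, with `g₂ = X 0` and `g₃ = X 1`. -/
abbrev RQ : Type := MvPolynomial (Fin 2) ℚ

/-- The variable `g₂`. -/
def gTwo : RQ := MvPolynomial.X 0

/-- The variable `g₃`. -/
def gThree : RQ := MvPolynomial.X 1

/-- The derivation `d/dp` on the ring of formal Laurent series `ℚ[g₂,g₃]((p))`. -/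
def lsDeriv (f : LaurentSeries RQ) : LaurentSeries RQ where
  coeff n := (n + 1 : ℤ) • f.coeff (n + 1)
  isPWO_support' := by
    have h : Function.support (fun n : ℤ => (n + 1 : ℤ) • f.coeff (n + 1)) ⊆
        (fun n : ℤ => n - 1) '' f.support := by
      intro n hn
      refine ⟨n + 1, ?_, by ring⟩
      intro h0
      apply hn
      simp only [Function.mem_support, not_not] at *
      rw [h0, smul_zero]
    exact (f.isPWO_support.image_of_monotone
      (fun a b hab => sub_le_sub_right hab 1)).mono h

/-- The formal Laurent series `℘ := p⁻² + Σ_{n≥0} aₙ pⁿ` attached to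
a family `(aₙ)` of elements of `ℚ[g₂,g₃]`. -/
def wp (a : ℕ → RQ) : LaurentSeries RQ :=
  HahnSeries.single (-2 : ℤ) (1 : RQ) +
    HahnSeries.ofPowerSeries ℤ RQ (PowerSeries.mk a)

open scoped Classical

/-- The power series `W(p) := 1 + Σ_{n≥0} aₙ p^{n+2}` (so that `℘(p) = W(p)/p²`). -/
def Wser (a : ℕ → RQ) : PowerSeries RQ :=
  PowerSeries.mk fun m => if m = 0 then 1 else if 2 ≤ m then a (m - 2) else 0

/-- The power series `V(p) := −2 + Σ_{n≥1} n·aₙ p^{n+2}` (so that `℘′(p) = V(p)/p³`). -/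
def Vser (a : ℕ → RQ) : PowerSeries RQ :=
  PowerSeries.mk fun m =>
    if m = 0 then -2 else if 2 ≤ m then (m - 2 : ℕ) • a (m - 2) else 0

/-- The embedding of `ℚ[g₂,g₃][[q]]` into `ℚ[g₂,g₃][[p,p′]]` substituting the
variable indexed by `i` for `q`. -/
def emb2 (i : Fin 2) (f : PowerSeries RQ) : MvPowerSeries (Fin 2) RQ :=
  fun d => if d = Finsupp.single i (d i) then PowerSeries.coeff (R := RQ) (d i) f else 0

-- coefficient of ofPowerSeries at an integer
lemma coe_coeff (f : PowerSeries RQ) (z : ℤ) :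
    (HahnSeries.ofPowerSeries ℤ RQ f).coeff z =
      if 0 ≤ z then PowerSeries.coeff z.toNat f else 0 := by
  by_cases hz : 0 ≤ z
  · obtain ⟨n, rfl⟩ := Int.eq_ofNat_of_zero_le hz
    rw [if_pos hz]
    simpa using HahnSeries.ofPowerSeries_apply_coeff f n
  · rw [if_neg hz, HahnSeries.ofPowerSeries_apply, HahnSeries.embDomain_notin_range]
    rintro ⟨m, hm⟩
    apply hz
    rw [← hm]
    exact Int.ofNat_nonneg m

lemma wp_eq (a : ℕ → RQ) :
    wp a = HahnSeries.single (-2 : ℤ) (1 : RQ) *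
      HahnSeries.ofPowerSeries ℤ RQ (Wser a) := by
  apply HahnSeries.coeff_inj.mp
  funext n
  have h1 : (HahnSeries.single (-2 : ℤ) (1 : RQ) *
      HahnSeries.ofPowerSeries ℤ RQ (Wser a)).coeff ((n + 2) + (-2)) =
      1 * (HahnSeries.ofPowerSeries ℤ RQ (Wser a)).coeff (n + 2) :=
    HahnSeries.coeff_single_mul_add
  have hn2 : (n + 2) + (-2) = n := by ring
  rw [hn2] at h1
  rw [h1, one_mul, coe_coeff]
  rw [wp, HahnSeries.coeff_add, coe_coeff]
  simp only [HahnSeries.coeff_single, Wser, PowerSeries.coeff_mk]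
  split_ifs <;> try omega
  all_goals try simp
  all_goals (try (congr 1; omega))

lemma lsderiv_eq (a : ℕ → RQ) :
    lsDeriv (wp a) = HahnSeries.single (-3 : ℤ) (1 : RQ) *
      HahnSeries.ofPowerSeries ℤ RQ (Vser a) := by
  apply HahnSeries.coeff_inj.mp
  funext n
  have h1 : (HahnSeries.single (-3 : ℤ) (1 : RQ) *
      HahnSeries.ofPowerSeries ℤ RQ (Vser a)).coeff ((n + 3) + (-3)) =
      1 * (HahnSeries.ofPowerSeries ℤ RQ (Vser a)).coeff (n + 3) :=
    HahnSeries.coeff_single_mul_add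
  have hn3 : (n + 3) + (-3) = n := by ring
  rw [hn3] at h1
  rw [h1, one_mul, coe_coeff]
  show (n + 1 : ℤ) • (wp a).coeff (n + 1) = _
  rw [wp, HahnSeries.coeff_add, coe_coeff]
  simp only [HahnSeries.coeff_single, Vser, PowerSeries.coeff_mk]
  split_ifs <;> try omega
  all_goals try (simp; try omega)
  · have hn : n = -3 := by omega
    subst hn
    push_cast
    norm_num
  · have he : ((n + 3).toNat - 2) = (n + 1).toNat := by omega
    rw [he, show (((n + 1).toNat : ℕ) : RQ) = ((n : RQ) + 1) by
      rw [← Int.cast_natCast, Int.toNat_of_nonneg (by omega : (0:ℤ) ≤ n + 1)]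
      push_cast
      ring]

lemma hkey (a : ℕ → RQ)
    (ha : (lsDeriv (wp a)) ^ 2 =
      4 * (wp a) ^ 3 - (HahnSeries.C gTwo : LaurentSeries RQ) * wp a -
        (HahnSeries.C gThree : LaurentSeries RQ)) :
    (Vser a) ^ 2 = 4 * (Wser a) ^ 3 -
      PowerSeries.C gTwo * PowerSeries.X ^ 4 * Wser a -
      PowerSeries.C gThree * PowerSeries.X ^ 6 := by
  have e1 : (HahnSeries.single (-3 : ℤ) (1 : RQ)) ^ 2 = HahnSeries.single (-6 : ℤ) 1 := by
    rw [HahnSeries.single_pow]; norm_num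
  have e2 : (HahnSeries.single (-2 : ℤ) (1 : RQ)) ^ 3 = HahnSeries.single (-6 : ℤ) 1 := by
    rw [HahnSeries.single_pow]; norm_num
  have e3 : HahnSeries.single (6 : ℤ) (1 : RQ) * HahnSeries.single (-6 : ℤ) 1 = 1 := by
    rw [HahnSeries.single_mul_single]; norm_num [HahnSeries.single_zero_one]
  have e4 : HahnSeries.single (6 : ℤ) (1 : RQ) * HahnSeries.single (-2 : ℤ) 1 =
      HahnSeries.single (4 : ℤ) 1 := by
    rw [HahnSeries.single_mul_single]; norm_num
  have e5 : (HahnSeries.single (1 : ℤ) (1 : RQ)) ^ 4 = HahnSeries.single (4 : ℤ) 1 := by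
    rw [HahnSeries.single_pow]; norm_num
  have e6 : (HahnSeries.single (1 : ℤ) (1 : RQ)) ^ 6 = HahnSeries.single (6 : ℤ) 1 := by
    rw [HahnSeries.single_pow]; norm_num
  rw [lsderiv_eq, wp_eq, mul_pow, mul_pow, e1, e2] at ha
  apply HahnSeries.ofPowerSeries_injective (Γ := ℤ)
  simp only [map_sub, map_mul, map_pow, map_ofNat, HahnSeries.ofPowerSeries_C,
    HahnSeries.ofPowerSeries_X]
  set oV := HahnSeries.ofPowerSeries ℤ RQ (Vser a)
  set oW := HahnSeries.ofPowerSeries ℤ RQ (Wser a)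
  calc oV ^ 2
      = (HahnSeries.single (6:ℤ) (1:RQ) * HahnSeries.single (-6:ℤ) 1) * oV ^ 2 := by
        rw [e3, one_mul]
    _ = HahnSeries.single (6:ℤ) (1:RQ) * (HahnSeries.single (-6:ℤ) 1 * oV ^ 2) := by
        ring
    _ = HahnSeries.single (6:ℤ) (1:RQ) *
        (4 * (HahnSeries.single (-6:ℤ) 1 * oW ^ 3) -
          HahnSeries.C gTwo * (HahnSeries.single (-2:ℤ) 1 * oW) - HahnSeries.C gThree) := by
        rw [ha]
    _ = 4 * ((HahnSeries.single (6:ℤ) (1:RQ) * HahnSeries.single (-6:ℤ) 1) * oW ^ 3) -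
        HahnSeries.C gTwo * ((HahnSeries.single (6:ℤ) (1:RQ) * HahnSeries.single (-2:ℤ) 1) * oW) -
        HahnSeries.C gThree * HahnSeries.single (6:ℤ) (1:RQ) := by
        ring
    _ = _ := by
        rw [e3, e4, one_mul, e5, e6]; ring

lemma coeff_mul_low (A B : PowerSeries RQ) (m : ℕ)
    (h : ∀ j < m, PowerSeries.coeff j A = 0) :
    PowerSeries.coeff m (A * B) =
      PowerSeries.coeff m A * PowerSeries.constantCoeff B := by
  rw [PowerSeries.coeff_mul]
  rw [show PowerSeries.constantCoeff B = PowerSeries.coeff 0 B by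
    rw [PowerSeries.coeff_zero_eq_constantCoeff]]
  apply Finset.sum_eq_single (m, 0)
  · rintro ⟨b1, b2⟩ hb hne
    rw [Finset.HasAntidiagonal.mem_antidiagonal] at hb
    have hb1 : b1 < m := by
      rcases lt_or_eq_of_le (Nat.le.intro hb : b1 ≤ m) with h' | h'
      · exact h'
      · exact absurd (by simp [h']; omega : (b1, b2) = (m, 0)) hne
    rw [h b1 hb1, zero_mul]
  · intro hm
    exact absurd (by simp : ((m, 0) : ℕ × ℕ) ∈ Finset.HasAntidiagonal.antidiagonal m) hm

lemma rescale_C' (r : RQ) (c : RQ) :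
    PowerSeries.rescale c (PowerSeries.C r) = PowerSeries.C r := by
  apply PowerSeries.ext
  intro n
  rw [PowerSeries.coeff_rescale, PowerSeries.coeff_C]
  split_ifs with h
  · subst h; simp
  · simp

lemma weven (a : ℕ → RQ)
    (ha : (lsDeriv (wp a)) ^ 2 =
      4 * (wp a) ^ 3 - (HahnSeries.C gTwo : LaurentSeries RQ) * wp a -
        (HahnSeries.C gThree : LaurentSeries RQ)) :
    ∀ m, Odd m → PowerSeries.coeff m (Wser a) = 0 := by
  have hk := hkey a ha
  set W := Wser a with hWdef
  set V := Vser a with hVdef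
  set Wb := PowerSeries.rescale (-1 : RQ) W with hWb
  set Vb := PowerSeries.rescale (-1 : RQ) V with hVb
  have hX4 : (PowerSeries.rescale (-1 : RQ)) (PowerSeries.X ^ 4) = PowerSeries.X ^ 4 := by
    rw [map_pow, PowerSeries.rescale_neg_one_X]; ring
  have hX6 : (PowerSeries.rescale (-1 : RQ)) (PowerSeries.X ^ 6) = PowerSeries.X ^ 6 := by
    rw [map_pow, PowerSeries.rescale_neg_one_X]; ring
  have hk2 : Vb ^ 2 = 4 * Wb ^ 3 -
      PowerSeries.C gTwo * PowerSeries.X ^ 4 * Wb -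
      PowerSeries.C gThree * PowerSeries.X ^ 6 := by
    have h2 := congrArg (PowerSeries.rescale (-1 : RQ)) hk
    simpa only [map_pow, map_sub, map_mul, map_ofNat, hX4, hX6, rescale_C'] using h2
  -- the difference
  set Δ := W - Wb with hΔdef
  suffices hΔ0 : Δ = 0 by
    intro m hm
    have hc := congrArg (PowerSeries.coeff m) hΔ0
    rw [hΔdef, map_sub, hWb, PowerSeries.coeff_rescale, hm.neg_one_pow, map_zero] at hc
    have : PowerSeries.coeff m W + PowerSeries.coeff m W = 0 := by
      rw [neg_one_mul, sub_neg_eq_add] at hc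
      exact hc
    have h2 : (2 : RQ) * PowerSeries.coeff m W = 0 := by
      rw [two_mul]; exact this
    rcases mul_eq_zero.mp h2 with h | h
    · exact absurd h two_ne_zero
    · exact h
  by_contra hne
  -- least nonzero coefficient of Δ
  have hex : ∃ m, PowerSeries.coeff m Δ ≠ 0 := by
    by_contra hc
    push_neg at hc
    exact hne (PowerSeries.ext fun n => by rw [hc n, map_zero])
  set m₀ := Nat.find hex with hm₀
  have hm₀ne : PowerSeries.coeff m₀ Δ ≠ 0 := Nat.find_spec hex
  have hlow : ∀ j < m₀, PowerSeries.coeff j Δ = 0 := fun j hj => by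
    have := Nat.find_min hex hj
    simpa using this
  have hfact : (V - Vb) * (V + Vb) =
      Δ * (4 * (W ^ 2 + W * Wb + Wb ^ 2) - PowerSeries.C gTwo * PowerSeries.X ^ 4) := by
    rw [hΔdef]
    linear_combination hk - hk2
  have hVW : ∀ j, PowerSeries.coeff j (V - Vb) =
      ((j - 2 : ℕ) : RQ) * PowerSeries.coeff j Δ := by
    intro j
    rw [hΔdef, map_sub, map_sub, hVb, hWb, PowerSeries.coeff_rescale, PowerSeries.coeff_rescale]
    by_cases h0 : j = 0
    · subst h0
      simp [hVdef, hWdef, Vser, Wser, PowerSeries.coeff_mk]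
    by_cases h1 : j = 1
    · subst h1
      simp [hVdef, hWdef, Vser, Wser, PowerSeries.coeff_mk]
    have h2 : 2 ≤ j := by omega
    rw [hVdef, hWdef]
    rw [Vser, Wser, PowerSeries.coeff_mk, PowerSeries.coeff_mk,
      if_neg h0, if_neg h0, if_pos h2, if_pos h2, nsmul_eq_mul]
    push_cast
    ring
  have hW1 : PowerSeries.coeff 1 W = 0 := by
    rw [hWdef, Wser, PowerSeries.coeff_mk]
    norm_num
  have hm3 : 3 ≤ m₀ := by
    have c0 : PowerSeries.coeff 0 Δ = 0 := by
      rw [hΔdef, map_sub, hWb, PowerSeries.coeff_rescale]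
      ring
    have c1 : PowerSeries.coeff 1 Δ = 0 := by
      rw [hΔdef, map_sub, hWb, PowerSeries.coeff_rescale, hW1]
      ring
    have c2 : PowerSeries.coeff 2 Δ = 0 := by
      rw [hΔdef, map_sub, hWb, PowerSeries.coeff_rescale]
      norm_num
    have n0 : m₀ ≠ 0 := fun h => hm₀ne (by rw [h]; exact c0)
    have n1 : m₀ ≠ 1 := fun h => hm₀ne (by rw [h]; exact c1)
    have n2 : m₀ ≠ 2 := fun h => hm₀ne (by rw [h]; exact c2)
    omega
  have hL : PowerSeries.coeff m₀ ((V - Vb) * (V + Vb)) =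
      PowerSeries.coeff m₀ (V - Vb) * PowerSeries.constantCoeff (V + Vb) :=
    coeff_mul_low _ _ _ (fun j hj => by rw [hVW j, hlow j hj, mul_zero])
  have hR : PowerSeries.coeff m₀
      (Δ * (4 * (W ^ 2 + W * Wb + Wb ^ 2) - PowerSeries.C gTwo * PowerSeries.X ^ 4)) =
      PowerSeries.coeff m₀ Δ * PowerSeries.constantCoeff
        (4 * (W ^ 2 + W * Wb + Wb ^ 2) - PowerSeries.C gTwo * PowerSeries.X ^ 4) :=
    coeff_mul_low _ _ _ hlow
  have hcV : PowerSeries.constantCoeff V = -2 := by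
    rw [hVdef, Vser]
    simp [PowerSeries.constantCoeff_mk]
  have hcW : PowerSeries.constantCoeff W = 1 := by
    rw [hWdef, Wser]
    simp [PowerSeries.constantCoeff_mk]
  have hcVb : PowerSeries.constantCoeff Vb = -2 := by
    rw [hVb, ← PowerSeries.coeff_zero_eq_constantCoeff_apply, PowerSeries.coeff_rescale,
      PowerSeries.coeff_zero_eq_constantCoeff_apply, hcV]
    ring
  have hcWb : PowerSeries.constantCoeff Wb = 1 := by
    rw [hWb, ← PowerSeries.coeff_zero_eq_constantCoeff_apply, PowerSeries.coeff_rescale,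
      PowerSeries.coeff_zero_eq_constantCoeff_apply, hcW]
    ring
  have hcVall : PowerSeries.constantCoeff (V + Vb) = -4 := by
    rw [map_add, hcV, hcVb]; norm_num
  have hcQ : PowerSeries.constantCoeff
      (4 * (W ^ 2 + W * Wb + Wb ^ 2) - PowerSeries.C gTwo * PowerSeries.X ^ 4) = 12 := by
    rw [map_sub, map_mul, map_mul, map_add, map_add, map_pow, map_pow, map_pow, map_mul,
      hcW, hcWb, PowerSeries.constantCoeff_X, PowerSeries.constantCoeff_C, map_ofNat]
    norm_num
  have heq := congrArg (PowerSeries.coeff m₀) hfact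
  rw [hL, hR, hVW m₀, hcVall, hcQ] at heq
  have hz : ((4 * (m₀ - 2) + 12 : ℕ) : RQ) * PowerSeries.coeff m₀ Δ = 0 := by
    push_cast
    linear_combination -heq
  rcases mul_eq_zero.mp hz with h | h
  · have := Nat.cast_eq_zero.mp h
    omega
  · exact hm₀ne h

/-! ### Two-variable power series machinery -/

abbrev M2 : Type := MvPowerSeries (Fin 2) RQ

def toD (i j : ℕ) : Fin 2 →₀ ℕ := Finsupp.single 0 i + Finsupp.single 1 j

lemma toD_apply0 (i j : ℕ) : toD i j 0 = i := by
  simp [toD, Finsupp.single_apply]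

lemma toD_apply1 (i j : ℕ) : toD i j 1 = j := by
  simp [toD, Finsupp.single_apply]

lemma eq_toD (d : Fin 2 →₀ ℕ) : d = toD (d 0) (d 1) := by
  ext x
  fin_cases x <;> simp [toD, Finsupp.single_apply]

/-- coefficient at `(i,j)` -/
def fc (f : M2) (i j : ℕ) : RQ := MvPowerSeries.coeff (toD i j) f

lemma coeff_eq_fc (f : M2) (d : Fin 2 →₀ ℕ) :
    MvPowerSeries.coeff d f = fc f (d 0) (d 1) := by
  rw [fc, ← eq_toD]

lemma toD_sub0 (i j t : ℕ) : toD i j - Finsupp.single 0 t = toD (i - t) j := by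
  ext x
  rw [Finsupp.tsub_apply]
  fin_cases x <;> simp [toD, Finsupp.single_apply]

lemma toD_sub1 (i j t : ℕ) : toD i j - Finsupp.single 1 t = toD i (j - t) := by
  ext x
  rw [Finsupp.tsub_apply]
  fin_cases x <;> simp [toD, Finsupp.single_apply]

lemma fc_X0_pow_mul (t : ℕ) (f : M2) (i j : ℕ) :
    fc (MvPowerSeries.X 0 ^ t * f) i j = if t ≤ i then fc f (i - t) j else 0 := by
  rw [fc, MvPowerSeries.X_pow_eq, MvPowerSeries.coeff_monomial_mul]
  simp only [Finsupp.single_le_iff, toD_apply0, one_mul, toD_sub0]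
  rfl

lemma fc_X1_pow_mul (t : ℕ) (f : M2) (i j : ℕ) :
    fc (MvPowerSeries.X 1 ^ t * f) i j = if t ≤ j then fc f i (j - t) else 0 := by
  rw [fc, MvPowerSeries.X_pow_eq, MvPowerSeries.coeff_monomial_mul]
  simp only [Finsupp.single_le_iff, toD_apply1, one_mul, toD_sub1]
  rfl

lemma toD_eq_single0 (i j : ℕ) : toD i j = Finsupp.single 0 i ↔ j = 0 := by
  constructor
  · intro h
    have := congrArg (fun d : Fin 2 →₀ ℕ => d 1) h
    simpa [toD_apply1, Finsupp.single_apply] using this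
  · rintro rfl
    ext x
    fin_cases x <;> simp [toD, Finsupp.single_apply]

lemma toD_eq_single1 (i j : ℕ) : toD i j = Finsupp.single 1 j ↔ i = 0 := by
  constructor
  · intro h
    have := congrArg (fun d : Fin 2 →₀ ℕ => d 0) h
    simpa [toD_apply0, Finsupp.single_apply] using this
  · rintro rfl
    ext x
    fin_cases x <;> simp [toD, Finsupp.single_apply]

lemma divide (t : ℕ) (ht : 0 < t) (f : M2)
    (H : ∀ i j, i < t →
      ∑ k ∈ Finset.range (j / t + 1), fc f (i + t * k) (j - t * k) = 0) :
    ∃ g : M2, (MvPowerSeries.X 0 ^ t - MvPowerSeries.X 1 ^ t) * g = f ∧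
      MvPowerSeries.constantCoeff g = fc f t 0 := by
  refine ⟨fun d => ∑ k ∈ Finset.range (d 1 / t + 1), fc f (d 0 + t + t * k) (d 1 - t * k),
    ?_, ?_⟩
  · set g : M2 := fun d =>
      ∑ k ∈ Finset.range (d 1 / t + 1), fc f (d 0 + t + t * k) (d 1 - t * k) with hg
    have hgfc : ∀ i' j', fc g i' j' =
        ∑ k ∈ Finset.range (j' / t + 1), fc f (i' + t + t * k) (j' - t * k) := by
      intro i' j'
      rw [fc, MvPowerSeries.coeff_apply, hg]
      simp only [toD_apply0, toD_apply1]
    apply MvPowerSeries.ext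
    intro d
    rw [coeff_eq_fc, coeff_eq_fc, sub_mul]
    set i := d 0
    set j := d 1
    rw [show fc ((MvPowerSeries.X 0 ^ t * g : M2) - MvPowerSeries.X 1 ^ t * g) i j =
      fc (MvPowerSeries.X 0 ^ t * g) i j - fc (MvPowerSeries.X 1 ^ t * g) i j from
        map_sub (MvPowerSeries.coeff (toD i j)) _ _]
    rw [fc_X0_pow_mul, fc_X1_pow_mul]
    by_cases hi : t ≤ i
    · rw [if_pos hi]
      have e1 : fc g (i - t) j = ∑ k ∈ Finset.range (j / t + 1), fc f (i + t * k) (j - t * k) := by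
        rw [hgfc]
        exact Finset.sum_congr rfl fun k _ => by congr 1; omega
      by_cases hj : t ≤ j
      · rw [if_pos hj, e1]
        have e2 : fc g i (j - t) =
            ∑ k ∈ Finset.range (j / t), fc f (i + t * (k + 1)) (j - t * (k + 1)) := by
          rw [hgfc]
          have hr : (j - t) / t + 1 = j / t := by
            rw [Nat.div_eq_sub_div ht hj]
          rw [hr]
          refine Finset.sum_congr rfl fun k _ => ?_
          have h1 : i + t + t * k = i + t * (k + 1) := by ring
          have h2 : j - t - t * k = j - t * (k + 1) := by
            rw [Nat.sub_sub]
            congr 1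
            ring
          rw [h1, h2]
        rw [e2, Finset.sum_range_succ']
        simp only [Nat.mul_zero, Nat.add_zero, Nat.sub_zero]
        ring
      · rw [if_neg hj, e1]
        have hj0 : j / t = 0 := Nat.div_eq_of_lt (by omega)
        rw [hj0]
        rw [Finset.sum_range_one]
        simp
    · rw [if_neg hi]
      have hH := H i j (by omega)
      by_cases hj : t ≤ j
      · rw [if_pos hj]
        have e2 : fc g i (j - t) =
            ∑ k ∈ Finset.range (j / t), fc f (i + t * (k + 1)) (j - t * (k + 1)) := by
          rw [hgfc]
          have hr : (j - t) / t + 1 = j / t := by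
            rw [Nat.div_eq_sub_div ht hj]
          rw [hr]
          refine Finset.sum_congr rfl fun k _ => ?_
          have h1 : i + t + t * k = i + t * (k + 1) := by ring
          have h2 : j - t - t * k = j - t * (k + 1) := by
            rw [Nat.sub_sub]
            congr 1
            ring
          rw [h1, h2]
        rw [e2]
        rw [Finset.sum_range_succ'] at hH
        simp only [Nat.mul_zero, Nat.add_zero, Nat.sub_zero] at hH
        linear_combination -hH
      · rw [if_neg hj]
        have hj0 : j / t = 0 := Nat.div_eq_of_lt (by omega)
        rw [hj0, Finset.sum_range_one] at hH
        simp only [Nat.mul_zero, Nat.add_zero, Nat.sub_zero] at hH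
        rw [hH]
        ring
  · refine (MvPowerSeries.coeff_zero_eq_constantCoeff_apply _).symm.trans ?_
    refine (MvPowerSeries.coeff_apply _ _).trans ?_
    simp only [Finsupp.coe_zero, Pi.zero_apply, Nat.zero_div, zero_add, Finset.sum_range_one,
      Nat.mul_zero, Nat.add_zero, Nat.sub_zero]

lemma fc_emb0 (gps : PowerSeries RQ) (i j : ℕ) :
    fc (emb2 0 gps) i j = if j = 0 then PowerSeries.coeff i gps else 0 := by
  rw [fc, MvPowerSeries.coeff_apply, emb2]
  simp only [toD_apply0, toD_eq_single0]

lemma fc_emb1 (gps : PowerSeries RQ) (i j : ℕ) :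
    fc (emb2 1 gps) i j = if i = 0 then PowerSeries.coeff j gps else 0 := by
  rw [fc, MvPowerSeries.coeff_apply, emb2]
  simp only [toD_apply1, toD_eq_single1]

lemma fc_ND (gps : PowerSeries RQ) (t : ℕ) (i j : ℕ) :
    fc ((MvPowerSeries.X 1 : M2) ^ t * emb2 0 gps -
        (MvPowerSeries.X 0 : M2) ^ t * emb2 1 gps) i j =
      (if j = t then PowerSeries.coeff i gps else 0) -
      (if i = t then PowerSeries.coeff j gps else 0) := by
  rw [show fc ((MvPowerSeries.X 1 : M2) ^ t * emb2 0 gps -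
        (MvPowerSeries.X 0 : M2) ^ t * emb2 1 gps) i j =
      fc ((MvPowerSeries.X 1 : M2) ^ t * emb2 0 gps) i j -
      fc ((MvPowerSeries.X 0 : M2) ^ t * emb2 1 gps) i j from
    map_sub (MvPowerSeries.coeff (toD i j)) _ _]
  rw [fc_X1_pow_mul, fc_X0_pow_mul, fc_emb0, fc_emb1]
  congr 1
  · split_ifs <;> first | rfl | omega | (congr 1; omega)
  · split_ifs <;> first | rfl | omega | (congr 1; omega)

lemma HN (a : ℕ → RQ) : ∀ i j, i < 1 →
    ∑ k ∈ Finset.range (j / 1 + 1),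
      fc ((MvPowerSeries.X 1 : M2) ^ 3 * emb2 0 (Vser a) -
        (MvPowerSeries.X 0 : M2) ^ 3 * emb2 1 (Vser a)) (i + 1 * k) (j - 1 * k) = 0 := by
  intro i j hi
  obtain rfl : i = 0 := by omega
  simp only [Nat.div_one, one_mul, Nat.zero_add, fc_ND]
  rw [Finset.sum_sub_distrib]
  by_cases h3 : 3 ≤ j
  · have hA : ∑ k ∈ Finset.range (j + 1),
        (if j - k = 3 then PowerSeries.coeff k (Vser a) else 0) =
        PowerSeries.coeff (j - 3) (Vser a) := by
      rw [Finset.sum_congr rfl (fun k hk => show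
          (if j - k = 3 then PowerSeries.coeff k (Vser a) else 0) =
          (if k = j - 3 then PowerSeries.coeff k (Vser a) else 0) by
        rw [Finset.mem_range] at hk
        by_cases h : k = j - 3
        · rw [if_pos h, if_pos (by omega)]
        · rw [if_neg (by omega), if_neg h])]
      rw [Finset.sum_ite_eq' (Finset.range (j + 1)) (j - 3)
        (fun k => PowerSeries.coeff k (Vser a)),
        if_pos (Finset.mem_range.mpr (by omega))]
    have hB : ∑ k ∈ Finset.range (j + 1),
        (if k = 3 then PowerSeries.coeff (j - k) (Vser a) else 0) =
        PowerSeries.coeff (j - 3) (Vser a) := by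
      rw [Finset.sum_ite_eq' (Finset.range (j + 1)) 3
        (fun k => PowerSeries.coeff (j - k) (Vser a)),
        if_pos (Finset.mem_range.mpr (by omega))]
    rw [hA, hB, sub_self]
  · rw [Finset.sum_eq_zero (fun k hk => by
      rw [Finset.mem_range] at hk
      rw [if_neg (by omega)]),
      Finset.sum_eq_zero (fun k hk => by
      rw [Finset.mem_range] at hk
      rw [if_neg (by omega)]), sub_self]

lemma HD (a : ℕ → RQ)
    (hWodd : ∀ m, Odd m → PowerSeries.coeff m (Wser a) = 0) : ∀ i j, i < 2 →
    ∑ k ∈ Finset.range (j / 2 + 1),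
      fc ((MvPowerSeries.X 1 : M2) ^ 2 * emb2 0 (Wser a) -
        (MvPowerSeries.X 0 : M2) ^ 2 * emb2 1 (Wser a)) (i + 2 * k) (j - 2 * k) = 0 := by
  intro i j hi
  simp only [fc_ND]
  rw [Finset.sum_sub_distrib]
  interval_cases i
  · -- i = 0
    by_cases h2 : 2 ≤ j
    · have hB : ∑ k ∈ Finset.range (j / 2 + 1),
          (if 0 + 2 * k = 2 then PowerSeries.coeff (j - 2 * k) (Wser a) else 0) =
          PowerSeries.coeff (j - 2) (Wser a) := by
        rw [Finset.sum_congr rfl (fun k hk => show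
            (if 0 + 2 * k = 2 then PowerSeries.coeff (j - 2 * k) (Wser a) else 0) =
            (if k = 1 then PowerSeries.coeff (j - 2 * k) (Wser a) else 0) by
          by_cases h : k = 1
          · rw [if_pos (by omega), if_pos h]
          · rw [if_neg (by omega), if_neg h])]
        rw [Finset.sum_ite_eq' (Finset.range (j / 2 + 1)) 1
          (fun k => PowerSeries.coeff (j - 2 * k) (Wser a)),
          if_pos (Finset.mem_range.mpr (by omega : 1 < j / 2 + 1))]
      by_cases hp : j % 2 = 0
      · have hA : ∑ k ∈ Finset.range (j / 2 + 1),
            (if j - 2 * k = 2 then PowerSeries.coeff (0 + 2 * k) (Wser a) else 0) =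
            PowerSeries.coeff (j - 2) (Wser a) := by
          rw [Finset.sum_congr rfl (fun k hk => show
              (if j - 2 * k = 2 then PowerSeries.coeff (0 + 2 * k) (Wser a) else 0) =
              (if k = (j - 2) / 2 then PowerSeries.coeff (0 + 2 * k) (Wser a) else 0) by
            rw [Finset.mem_range] at hk
            by_cases h : k = (j - 2) / 2
            · rw [if_pos (by omega), if_pos h]
            · rw [if_neg (by omega), if_neg h])]
          rw [Finset.sum_ite_eq' (Finset.range (j / 2 + 1)) ((j - 2) / 2)
            (fun k => PowerSeries.coeff (0 + 2 * k) (Wser a)),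
            if_pos (Finset.mem_range.mpr (by omega : (j - 2) / 2 < j / 2 + 1))]
          rw [show 0 + 2 * ((j - 2) / 2) = j - 2 from by omega]
        rw [hA, hB, sub_self]
      · have hA : ∑ k ∈ Finset.range (j / 2 + 1),
            (if j - 2 * k = 2 then PowerSeries.coeff (0 + 2 * k) (Wser a) else 0) = 0 :=
          Finset.sum_eq_zero (fun k hk => by
            rw [Finset.mem_range] at hk
            rw [if_neg (by omega)])
        rw [hA, hB, hWodd (j - 2) (Nat.odd_iff.mpr (by omega)), zero_sub, neg_zero]
    · rw [Finset.sum_eq_zero (fun k hk => by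
        rw [Finset.mem_range] at hk
        rw [if_neg (by omega)]),
        Finset.sum_eq_zero (fun k hk => by
        rw [Finset.mem_range] at hk
        rw [if_neg (by omega)]), sub_self]
  · -- i = 1
    rw [Finset.sum_eq_zero (fun k hk => by
        rw [Finset.mem_range] at hk
        by_cases h : j - 2 * k = 2
        · rw [if_pos h, hWodd (1 + 2 * k) (Nat.odd_iff.mpr (by omega))]
        · rw [if_neg h]),
      Finset.sum_eq_zero (fun k hk => by
        rw [if_neg (by omega)]), sub_self]

/-- with `D := p′²·W(p) − p²·W(p′)` and `N := p′³·V(p) − p³·V(p′)`,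
there exists `h ∈ ℚ[g₂,g₃][[p,p′]]` with `(p+p′)·N = h·D`. -/
theorem statement10 (a : ℕ → RQ)
    (ha : (lsDeriv (wp a)) ^ 2 =
      4 * (wp a) ^ 3 - (HahnSeries.C gTwo : LaurentSeries RQ) * wp a -
        (HahnSeries.C gThree : LaurentSeries RQ)) :
    ∃ h : MvPowerSeries (Fin 2) RQ,
      (MvPowerSeries.X 0 + MvPowerSeries.X 1) *
          ((MvPowerSeries.X 1) ^ 3 * emb2 0 (Vser a) -
            (MvPowerSeries.X 0) ^ 3 * emb2 1 (Vser a)) =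
        h * ((MvPowerSeries.X 1) ^ 2 * emb2 0 (Wser a) -
          (MvPowerSeries.X 0) ^ 2 * emb2 1 (Wser a)) := by
  have hWodd := weven a ha
  obtain ⟨M, hM, -⟩ := divide 1 one_pos _ (HN a)
  obtain ⟨E, hE, hEc⟩ := divide 2 two_pos _ (HD a hWodd)
  rw [pow_one, pow_one] at hM
  have hfcD : fc ((MvPowerSeries.X 1 : M2) ^ 2 * emb2 0 (Wser a) -
      (MvPowerSeries.X 0 : M2) ^ 2 * emb2 1 (Wser a)) 2 0 = -1 := by
    rw [fc_ND, if_neg (by omega), if_pos rfl]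
    have h0 : PowerSeries.coeff 0 (Wser a) = 1 := by
      simp [Wser]
    rw [h0]
    ring
  have hEc' : MvPowerSeries.constantCoeff E = ((-1 : RQˣ) : RQ) := by
    rw [hEc, hfcD]
    simp
  have hinv := MvPowerSeries.mul_invOfUnit E (-1 : RQˣ) hEc'
  refine ⟨MvPowerSeries.invOfUnit E (-1) * M, ?_⟩
  calc (MvPowerSeries.X 0 + MvPowerSeries.X 1) *
        ((MvPowerSeries.X 1 : M2) ^ 3 * emb2 0 (Vser a) -
          (MvPowerSeries.X 0) ^ 3 * emb2 1 (Vser a))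
      = ((MvPowerSeries.X 0 : M2) ^ 2 - (MvPowerSeries.X 1) ^ 2) * M := by
        rw [← hM]; ring
    _ = (((MvPowerSeries.X 0 : M2) ^ 2 - (MvPowerSeries.X 1) ^ 2) *
          (E * MvPowerSeries.invOfUnit E (-1))) * M := by
        rw [hinv, mul_one]
    _ = (MvPowerSeries.invOfUnit E (-1) * M) *
          (((MvPowerSeries.X 0 : M2) ^ 2 - (MvPowerSeries.X 1) ^ 2) * E) := by
        ring
    _ = _ := by rw [hE]
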